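/- The algebraic connectivity of an (m+1)-uniform undirected hypergraph G is zero if and only if G is not connected, and a(G) > 0 if G is connected (for G with at least 2 vertices). -/

import Mathlib

open Finset

def pairSum {n : ℕ} (e : Finset (Fin n)) (x : Fin n → ℝ) : ℝ :=
  ∑ i ∈ e, ∑ j ∈ e, if i < j then (x i - x j)^2 else 0

def Qform {n : ℕ} (Es : Finset (Finset (Fin n))) (x : Fin n → ℝ) : ℝ :=
  ∑ e ∈ Es, pairSum e x

noncomputable def algConOn {n : ℕ} (V : Finset (Fin n))
    (Es : Finset (Finset (Fin n))) : ℝ :=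
  sInf {y : ℝ | ∃ x : Fin n → ℝ, (∀ i ∉ V, x i = 0) ∧ (∑ i ∈ V, x i = 0) ∧
    (∑ i ∈ V, (x i)^2 = 1) ∧ y = Qform Es x}

def HConnected {n : ℕ} (Es : Finset (Finset (Fin n))) : Prop :=
  ∀ u v : Fin n, Relation.ReflTransGen (fun a b => ∃ e ∈ Es, a ∈ e ∧ b ∈ e) u v

lemma Qform_nonneg {n : ℕ} (Es : Finset (Finset (Fin n))) (x : Fin n → ℝ) :
    0 ≤ Qform Es x := by
  apply Finset.sum_nonneg; intro e _
  apply Finset.sum_nonneg; intro i _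
  apply Finset.sum_nonneg; intro j _
  split <;> positivity

lemma Qform_continuous {n : ℕ} (Es : Finset (Finset (Fin n))) :
    Continuous (Qform Es) := by
  unfold Qform pairSum
  apply continuous_finset_sum; intro e _
  apply continuous_finset_sum; intro i _
  apply continuous_finset_sum; intro j _
  split
  · fun_prop
  · exact continuous_const

noncomputable def blockVec {n : ℕ} (C : Finset (Fin n)) : Fin n → ℝ :=
  fun i => if i ∈ C then ((n : ℝ) - C.card) * (Real.sqrt (C.card * ((n:ℝ) - C.card) * n))⁻¹
           else -(C.card : ℝ) * (Real.sqrt (C.card * ((n:ℝ) - C.card) * n))⁻¹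

lemma block_spec {n : ℕ} (C : Finset (Fin n)) (hc1 : 1 ≤ C.card) (hc2 : C.card < n) :
    (∑ i, blockVec C i = 0) ∧ (∑ i, (blockVec C i)^2 = 1) := by
  set c : ℝ := (C.card : ℝ) with hc
  set A : ℝ := (n : ℝ) - c with hA
  set t : ℝ := (Real.sqrt (c * A * n))⁻¹ with ht
  have hc0 : (1:ℝ) ≤ c := by rw [hc]; exact_mod_cast hc1
  have hnn : ((C.card : ℝ)) + 1 ≤ (n : ℝ) := by exact_mod_cast hc2
  have hA0 : (1:ℝ) ≤ A := by rw [hA, hc]; linarith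
  have hn0 : (0:ℝ) < n := by linarith
  have hP : 0 < c * A * n := mul_pos (mul_pos (by linarith) (by linarith)) hn0
  have ht2 : t^2 = (c * A * n)⁻¹ := by
    rw [ht, ← Real.sqrt_inv, Real.sq_sqrt (by positivity)]
  have hval1 : ∀ i ∈ C, blockVec C i = A * t := by
    intro i hi; rw [blockVec]; simp only [if_pos hi]; rfl
  have hval2 : ∀ i ∉ C, blockVec C i = -c * t := by
    intro i hi; rw [blockVec]; simp only [if_neg hi]; rfl
  have hCfilter : univ.filter (fun i => i ∈ C) = C := by ext i; simp
  have hcomplR : ((univ.filter (fun i => i ∉ C)).card : ℝ) = A := by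
    have : (univ.filter (fun i => i ∉ C)).card = n - C.card := by
      rw [Finset.filter_not, hCfilter]
      simp [Finset.card_sdiff_of_subset (Finset.subset_univ C)]
    rw [this, Nat.cast_sub hc2.le, hA, hc]
  have e1 : ∑ i ∈ univ.filter (fun i => i ∈ C), blockVec C i = c * (A * t) := by
    rw [hCfilter, Finset.sum_congr rfl hval1, Finset.sum_const, nsmul_eq_mul, hc]
  have e2 : ∑ i ∈ univ.filter (fun i => i ∉ C), blockVec C i = A * (-c * t) := by
    rw [Finset.sum_congr rfl (fun i hi => hval2 i (Finset.mem_filter.mp hi).2),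
      Finset.sum_const, nsmul_eq_mul, hcomplR]
  have f1 : ∑ i ∈ univ.filter (fun i => i ∈ C), (blockVec C i)^2 = c * (A * t)^2 := by
    rw [hCfilter, Finset.sum_congr rfl (fun i hi => by rw [hval1 i hi]),
      Finset.sum_const, nsmul_eq_mul, hc]
  have f2 : ∑ i ∈ univ.filter (fun i => i ∉ C), (blockVec C i)^2 = A * (c * t)^2 := by
    rw [Finset.sum_congr rfl (fun i hi => by rw [hval2 i (Finset.mem_filter.mp hi).2]),
      Finset.sum_const, nsmul_eq_mul, hcomplR]
    ring
  constructor
  · rw [← Finset.sum_filter_add_sum_filter_not univ (fun i => i ∈ C), e1, e2]; ring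
  · rw [← Finset.sum_filter_add_sum_filter_not univ (fun i => i ∈ C), f1, f2]
    have hAc : A + c = n := by rw [hA]; ring
    have : c * (A * t)^2 + A * (c * t)^2 = t^2 * (c * A * (A + c)) := by ring
    rw [this, hAc, ht2]
    field_simp

/-- the edge-constancy consequence of `Qform x = 0` -/
lemma Qform_eq_zero_iff {n : ℕ} (Es : Finset (Finset (Fin n))) (x : Fin n → ℝ)
    (h : Qform Es x = 0) : ∀ e ∈ Es, ∀ i ∈ e, ∀ j ∈ e, x i = x j := by
  have h1 := (Finset.sum_eq_zero_iff_of_nonneg (fun e _ => by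
    apply Finset.sum_nonneg; intro i _; apply Finset.sum_nonneg; intro j _
    split <;> positivity)).mp h
  intro e he i hi j hj
  have h2 := (Finset.sum_eq_zero_iff_of_nonneg (fun i _ => by
    apply Finset.sum_nonneg; intro j _; split <;> positivity)).mp (h1 e he)
  have key : ∀ a ∈ e, ∀ b ∈ e, a < b → x a = x b := by
    intro a ha b hb hab
    have h3 := (Finset.sum_eq_zero_iff_of_nonneg (fun j _ => by
      split <;> positivity)).mp (h2 a ha) b hb
    rw [if_pos hab] at h3
    have := sq_eq_zero_iff.mp h3
    linarith
  rcases lt_trichotomy i j with hij | hij | hij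
  · exact key i hi j hj hij
  · rw [hij]
  · exact (key j hj i hi hij).symm

theorem stmt2 {n m : ℕ} (hn : 2 ≤ n) (Es : Finset (Finset (Fin n)))
    (hU : ∀ e ∈ Es, e.card = m + 1) :
    (algConOn Finset.univ Es = 0 ↔ ¬ HConnected Es) ∧
    (HConnected Es → 0 < algConOn Finset.univ Es) := by
  classical
  set r : Fin n → Fin n → Prop := fun a b => ∃ e ∈ Es, a ∈ e ∧ b ∈ e with hr
  set K : Set (Fin n → ℝ) := {x | (∑ i, x i = 0) ∧ (∑ i, (x i)^2 = 1)} with hK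
  have hSeq : algConOn Finset.univ Es = sInf (Qform Es '' K) := by
    unfold algConOn; congr 1; ext y; constructor
    · rintro ⟨x, -, h1, h2, rfl⟩; exact ⟨x, ⟨h1, h2⟩, rfl⟩
    · rintro ⟨x, ⟨h1, h2⟩, rfl⟩
      exact ⟨x, fun i hi => absurd (Finset.mem_univ i) hi, h1, h2, rfl⟩
  -- K is compact
  have hclosed : IsClosed K := by
    have : K = (fun x : Fin n → ℝ => ((∑ i, x i), ∑ i, (x i)^2)) ⁻¹' {((0:ℝ),(1:ℝ))} := by
      ext x; simp [hK, Prod.ext_iff]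
    rw [this]
    exact IsClosed.preimage (by fun_prop) isClosed_singleton
  have hsub : K ⊆ Metric.closedBall 0 1 := by
    rintro x ⟨h1, h2⟩
    rw [Metric.mem_closedBall, dist_zero_right, pi_norm_le_iff_of_nonneg zero_le_one]
    intro i
    have hile : (x i)^2 ≤ 1 := by
      calc (x i)^2 ≤ ∑ j, (x j)^2 :=
        Finset.single_le_sum (f := fun j => (x j)^2) (fun j _ => sq_nonneg _) (Finset.mem_univ i)
      _ = 1 := h2
    rw [Real.norm_eq_abs, abs_le]
    constructor <;> nlinarith
  have hKcomp : IsCompact K :=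
    (isCompact_closedBall (0 : Fin n → ℝ) 1).of_isClosed_subset hclosed hsub
  -- K is nonempty
  have i0 : Fin n := ⟨0, by omega⟩
  have hKne : K.Nonempty := by
    refine ⟨blockVec {i0}, ?_⟩
    have := block_spec ({i0} : Finset (Fin n)) (by simp) (by simp; omega)
    exact ⟨this.1, this.2⟩
  -- the infimum is attained
  have himg : IsCompact (Qform Es '' K) := hKcomp.image (Qform_continuous Es)
  have himgne : (Qform Es '' K).Nonempty := hKne.image _
  obtain ⟨x₀, hx₀K, hx₀⟩ := himg.sInf_mem himgne
  have hbdd : BddBelow (Qform Es '' K) := by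
    refine ⟨0, ?_⟩; rintro y ⟨z, -, rfl⟩; exact Qform_nonneg Es z
  have hnonneg : 0 ≤ sInf (Qform Es '' K) := by
    rw [← hx₀]; exact Qform_nonneg Es x₀
  -- connected → positive
  have key : HConnected Es → 0 < algConOn Finset.univ Es := by
    intro hconn
    rw [hSeq]
    rcases hnonneg.lt_or_eq with h | h
    · exact h
    · exfalso
      have hQ0 : Qform Es x₀ = 0 := by rw [hx₀, ← h]
      have hedge := Qform_eq_zero_iff Es x₀ hQ0
      have hstep : ∀ a b : Fin n, r a b → x₀ a = x₀ b := by
        rintro a b ⟨e, he, ha, hb⟩; exact hedge e he a ha b hb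
      have hRT : ∀ a b : Fin n, Relation.ReflTransGen r a b → x₀ a = x₀ b := by
        intro a b hab
        induction hab with
        | refl => rfl
        | tail _ h2 ih => exact ih.trans (hstep _ _ h2)
      have hconst : ∀ i, x₀ i = x₀ i0 := fun i => (hRT i0 i (hconn i0 i)).symm
      obtain ⟨hsum, hsq⟩ := hx₀K
      have : ∑ i, x₀ i = (n : ℝ) * x₀ i0 := by
        rw [Finset.sum_congr rfl (fun i _ => hconst i), Finset.sum_const, nsmul_eq_mul,
          Finset.card_univ, Fintype.card_fin]
      have hzero : x₀ i0 = 0 := by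
        have hn0 : (0:ℝ) < n := by positivity
        rw [this] at hsum
        rcases mul_eq_zero.mp hsum with h' | h'
        · exact absurd h' (by positivity)
        · exact h'
      have : ∑ i, (x₀ i)^2 = 0 :=
        Finset.sum_eq_zero (fun i _ => by rw [hconst i, hzero]; ring)
      rw [hsq] at this; norm_num at this
  constructor
  · constructor
    · intro h0 hconn
      have := key hconn
      rw [h0] at this; exact lt_irrefl 0 this
    · -- disconnected → zero
      intro hnc
      unfold HConnected at hnc
      push_neg at hnc
      obtain ⟨u, v, huv⟩ := hnc
      set C : Finset (Fin n) := univ.filter (fun w => Relation.ReflTransGen r u w) with hC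
      have hu : u ∈ C := by simp only [hC, Finset.mem_filter, Finset.mem_univ, true_and]; exact Relation.ReflTransGen.refl
      have hv : v ∉ C := by simp [hC]; exact huv
      have hc1 : 1 ≤ C.card := Finset.card_pos.mpr ⟨u, hu⟩
      have hc2 : C.card < n := by
        have : C ⊂ univ := Finset.ssubset_univ_iff.mpr (fun h => hv (h ▸ Finset.mem_univ v))
        have := Finset.card_lt_card this
        simpa using this
      obtain ⟨hsum, hsq⟩ := block_spec C hc1 hc2
      have hmemC : ∀ e ∈ Es, ∀ i ∈ e, ∀ j ∈ e, (i ∈ C ↔ j ∈ C) := by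
        intro e he i hi j hj
        constructor <;> intro h <;>
        · simp only [hC, Finset.mem_filter, Finset.mem_univ, true_and] at h ⊢
          exact h.tail ⟨e, he, by tauto⟩
      have hQ0 : Qform Es (blockVec C) = 0 := by
        apply Finset.sum_eq_zero; intro e he
        apply Finset.sum_eq_zero; intro i hi
        apply Finset.sum_eq_zero; intro j hj
        have hij : blockVec C i = blockVec C j := by
          by_cases h : i ∈ C
          · have h' := (hmemC e he i hi j hj).mp h
            simp only [blockVec]; rw [if_pos h, if_pos h']
          · have h' : j ∉ C := fun hj' => h ((hmemC e he i hi j hj).mpr hj')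
            simp only [blockVec]; rw [if_neg h, if_neg h']
        split
        · rw [hij]; ring
        · rfl
      have hle : sInf (Qform Es '' K) ≤ 0 := by
        rw [← hQ0]
        exact csInf_le hbdd ⟨blockVec C, ⟨hsum, hsq⟩, rfl⟩
      rw [hSeq]
      linarith
  · exact key
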